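/- Neyman-orthogonality of the weighted risk in the Q⁰-direction: for all measurable g, g* : 𝒱 → ℝ and every measurable direction h : 𝒳 → ℝ (all displayed random variables integrable), E[(λ(π(X))·(1−A)/(1−π(X)) − w)·h(X)·(g(V) − g*(V))] = 0, where w := (A − π(X))·λ'(π(X)) + λ(π(X)); equivalently, the directional derivative of the risk-gradient in g, taken in the direction of a perturbation of the outcome regression Q⁰, vanishes at the truth. -/

import Mathlib

open MeasureTheory ProbabilityTheory

/-- The weight `w = (A − π(X))·λ'(π(X)) + λ(π(X))`. -/
noncomputable def wFun {Ω 𝓧 : Type*} (lam lam' : ℝ → ℝ) (A : Ω → ℝ) (X : Ω → 𝓧)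
    (p : 𝓧 → ℝ) (ω : Ω) : ℝ :=
  (A ω - p (X ω)) * lam' (p (X ω)) + lam (p (X ω))

/-- Statement 7: Neyman-orthogonality of the weighted risk in the `Q⁰`-direction:
`E[(λ(π(X))·(1−A)/(1−π(X)) − w)·h(X)·(g(V) − g*(V))] = 0`. -/
theorem stmt8 {Ω 𝓧 𝓥 : Type*} [MeasurableSpace Ω] [MeasurableSpace 𝓧] [MeasurableSpace 𝓥]
    (P : Measure Ω) [IsProbabilityMeasure P]
    (X : Ω → 𝓧) (hX : Measurable X) (v : 𝓧 → 𝓥) (hv : Measurable v)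
    (A : Ω → ℝ) (hA : Measurable A) (hA01 : ∀ ω, A ω = 0 ∨ A ω = 1)
    (pr : 𝓧 → ℝ) (hprm : Measurable pr) (hpr : ∀ x, 0 < pr x ∧ pr x < 1)
    (hprCE : (fun ω => pr (X ω)) =ᵐ[P] P[A | MeasurableSpace.comap X inferInstance])
    (lam lam' : ℝ → ℝ) (hlam : ∀ p, HasDerivAt lam (lam' p) p) (hlam' : Continuous lam')
    (h : 𝓧 → ℝ) (hh : Measurable h)
    (g gstar : 𝓥 → ℝ) (hg : Measurable g) (hgstar : Measurable gstar)
    (hI : Integrable (fun ω =>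
      (lam (pr (X ω)) * (1 - A ω) / (1 - pr (X ω)) - wFun lam lam' A X pr ω) * h (X ω)
        * (g (v (X ω)) - gstar (v (X ω)))) P) :
    ∫ ω, (lam (pr (X ω)) * (1 - A ω) / (1 - pr (X ω)) - wFun lam lam' A X pr ω) * h (X ω)
        * (g (v (X ω)) - gstar (v (X ω))) ∂P = 0 := by
  classical
  have hm := hX.comap_le
  set m := MeasurableSpace.comap X inferInstance with hm_def
  have hlamc : Continuous lam :=
    continuous_iff_continuousAt.2 fun p => (hlam p).continuousAt
  -- F : the full integrand; F0, F1 : its values when A = 0 resp. A = 1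
  set F : Ω → ℝ := fun ω =>
    (lam (pr (X ω)) * (1 - A ω) / (1 - pr (X ω)) - wFun lam lam' A X pr ω) * h (X ω)
      * (g (v (X ω)) - gstar (v (X ω))) with hF_def
  set F0 : 𝓧 → ℝ := fun x =>
    (lam (pr x) * (1 - 0) / (1 - pr x) - ((0 - pr x) * lam' (pr x) + lam (pr x))) * h x
      * (g (v x) - gstar (v x)) with hF0_def
  set F1 : 𝓧 → ℝ := fun x =>
    (lam (pr x) * (1 - 1) / (1 - pr x) - ((1 - pr x) * lam' (pr x) + lam (pr x))) * h x
      * (g (v x) - gstar (v x)) with hF1_def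
  have hF0m : Measurable F0 := by
    apply Measurable.mul
    apply Measurable.mul
    · exact (((hlamc.measurable.comp hprm).mul measurable_const).div
        (measurable_const.sub hprm)).sub
        (((measurable_const.sub hprm).mul (hlam'.measurable.comp hprm)).add
          (hlamc.measurable.comp hprm))
    · exact hh
    · exact (hg.comp hv).sub (hgstar.comp hv)
  have hF1m : Measurable F1 := by
    apply Measurable.mul
    apply Measurable.mul
    · exact (((hlamc.measurable.comp hprm).mul measurable_const).div
        (measurable_const.sub hprm)).sub
        (((measurable_const.sub hprm).mul (hlam'.measurable.comp hprm)).add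
          (hlamc.measurable.comp hprm))
    · exact hh
    · exact (hg.comp hv).sub (hgstar.comp hv)
  -- X is measurable with respect to m
  have hXm : Measurable[m] X := fun s hs => ⟨s, hs, rfl⟩
  have hF0Xm : StronglyMeasurable[m] (fun ω => F0 (X ω)) :=
    (hF0m.comp hXm).stronglyMeasurable
  have hF1Xm : StronglyMeasurable[m] (fun ω => F1 (X ω)) :=
    (hF1m.comp hXm).stronglyMeasurable
  -- decomposition of F
  have hdecomp : ∀ ω, F ω = F0 (X ω) * (1 - A ω) + F1 (X ω) * A ω := by
    intro ω
    rcases hA01 ω with h0 | h1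
    · simp [hF_def, hF0_def, hF1_def, wFun, h0]
    · simp [hF_def, hF0_def, hF1_def, wFun, h1]
  have hF0eq : (fun ω => F0 (X ω) * (1 - A ω)) = fun ω => F ω * (1 - A ω) := by
    funext ω
    rcases hA01 ω with h0 | h1
    · simp [hdecomp ω, h0]
    · simp [h1]
  have hF1eq : (fun ω => F1 (X ω) * A ω) = fun ω => F ω * A ω := by
    funext ω
    rcases hA01 ω with h0 | h1
    · simp [h0]
    · simp [hdecomp ω, h1]
  have hAbd : ∀ ω, ‖A ω‖ ≤ 1 := by
    intro ω; rcases hA01 ω with h' | h' <;> simp [h']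
  have hAint : Integrable A P :=
    (integrable_const (1 : ℝ)).mono' hA.aestronglyMeasurable (ae_of_all _ hAbd)
  have h1Aint : Integrable (fun ω => 1 - A ω) P := (integrable_const (1 : ℝ)).sub hAint
  have hFA : Integrable (fun ω => F1 (X ω) * A ω) P := by
    rw [hF1eq]
    have := hI.bdd_mul hA.aestronglyMeasurable (ae_of_all _ hAbd)
    exact this.congr (ae_of_all _ fun ω => mul_comm _ _)
  have hF1A : Integrable (fun ω => F0 (X ω) * (1 - A ω)) P := by
    rw [hF0eq]
    have hb : ∀ ω, ‖1 - A ω‖ ≤ 2 := by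
      intro ω; rcases hA01 ω with h' | h' <;> simp [h']
    have := hI.bdd_mul (measurable_const.sub hA).aestronglyMeasurable (ae_of_all _ hb)
    exact this.congr (ae_of_all _ fun ω => mul_comm _ _)
  -- conditional expectation computations
  have hCE1A : P[(fun ω => 1 - A ω)|m] =ᵐ[P] fun ω => 1 - pr (X ω) := by
    have h1 : P[(fun ω => 1 - A ω)|m] =ᵐ[P] P[(fun _ => (1:ℝ))|m] - P[A|m] :=
      condExp_sub (integrable_const 1) hAint m
    have h2 : P[(fun _ => (1:ℝ))|m] = fun _ => (1:ℝ) := condExp_const (μ := P) hm (1:ℝ)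
    filter_upwards [h1, hprCE] with ω hω hω'
    simp only [Pi.sub_apply, h2] at hω
    rw [hω, ← hω']
  have key1 : ∫ ω, F1 (X ω) * A ω ∂P = ∫ ω, F1 (X ω) * pr (X ω) ∂P := by
    have hpull : P[(fun ω => F1 (X ω) * A ω)|m]
        =ᵐ[P] fun ω => F1 (X ω) * (P[A|m]) ω :=
      condExp_mul_of_stronglyMeasurable_left hF1Xm hFA hAint
    rw [← integral_condExp (μ := P) hm (f := fun ω => F1 (X ω) * A ω)]
    refine integral_congr_ae ?_
    filter_upwards [hpull, hprCE] with ω h1 h2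
    rw [h1, ← h2]
  have key0 : ∫ ω, F0 (X ω) * (1 - A ω) ∂P = ∫ ω, F0 (X ω) * (1 - pr (X ω)) ∂P := by
    have hpull : P[(fun ω => F0 (X ω) * (1 - A ω))|m]
        =ᵐ[P] fun ω => F0 (X ω) * (P[(fun ω => 1 - A ω)|m]) ω :=
      condExp_mul_of_stronglyMeasurable_left hF0Xm hF1A h1Aint
    rw [← integral_condExp (μ := P) hm (f := fun ω => F0 (X ω) * (1 - A ω))]
    refine integral_congr_ae ?_
    filter_upwards [hpull, hCE1A] with ω h1 h2
    rw [h1, h2]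
  -- integrability of the conditional versions
  have hint1 : Integrable (fun ω => F1 (X ω) * pr (X ω)) P := by
    refine (integrable_condExp (μ := P) (f := fun ω => F1 (X ω) * A ω) (m := m)).congr ?_
    have hpull : P[(fun ω => F1 (X ω) * A ω)|m]
        =ᵐ[P] fun ω => F1 (X ω) * (P[A|m]) ω :=
      condExp_mul_of_stronglyMeasurable_left hF1Xm hFA hAint
    filter_upwards [hpull, hprCE] with ω h1 h2
    rw [h1, ← h2]
  have hint0 : Integrable (fun ω => F0 (X ω) * (1 - pr (X ω))) P := by
    refine (integrable_condExp (μ := P) (f := fun ω => F0 (X ω) * (1 - A ω)) (m := m)).congr ?_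
    have hpull : P[(fun ω => F0 (X ω) * (1 - A ω))|m]
        =ᵐ[P] fun ω => F0 (X ω) * (P[(fun ω => 1 - A ω)|m]) ω :=
      condExp_mul_of_stronglyMeasurable_left hF0Xm hF1A h1Aint
    filter_upwards [hpull, hCE1A] with ω h1 h2
    rw [h1, h2]
  -- the pointwise identity making everything vanish
  have hzero : ∀ x, F0 x * (1 - pr x) + F1 x * pr x = 0 := by
    intro x
    obtain ⟨hp0, hp1⟩ := hpr x
    have h1p : (1 : ℝ) - pr x ≠ 0 := sub_ne_zero.2 (ne_of_lt hp1).symm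
    simp only [hF0_def, hF1_def]
    field_simp
    ring
  calc ∫ ω, F ω ∂P
      = ∫ ω, (F0 (X ω) * (1 - A ω) + F1 (X ω) * A ω) ∂P :=
        integral_congr_ae (ae_of_all _ hdecomp)
    _ = ∫ ω, F0 (X ω) * (1 - A ω) ∂P + ∫ ω, F1 (X ω) * A ω ∂P :=
        integral_add hF1A hFA
    _ = ∫ ω, F0 (X ω) * (1 - pr (X ω)) ∂P + ∫ ω, F1 (X ω) * pr (X ω) ∂P := by
        rw [key0, key1]
    _ = ∫ ω, (F0 (X ω) * (1 - pr (X ω)) + F1 (X ω) * pr (X ω)) ∂P :=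
        (integral_add hint0 hint1).symm
    _ = 0 := by
        simp only [hzero]
        exact integral_zero _ _
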